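/- Let p be a prime, H > 0, and let X = (X_n)_{n∈ℕ₀} be a dt-ss-si process with scaling function b(n) = (|n|_p)^H. Then almost surely, for every n ∈ ℕ₀, liminf_{m→∞} |X_m − X_n| = 0; that is, almost surely each value X_n is an accumulation point of the sequence (X_m)_{m∈ℕ₀}. -/

import Mathlib

open MeasureTheory ProbabilityTheory Filter

noncomputable section

/-- The `p`-adic norm of a natural number, as a real number (`0` for `n = 0`). -/
def padicNormNat (p n : ℕ) : ℝ := ((padicNorm p (n : ℚ) : ℚ) : ℝ)

/-- Equality in distribution of two families of random variables: the laws of the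
induced maps into the product space coincide. -/
def EqDistFam {ι Ω₁ Ω₂ E : Type*} [MeasurableSpace Ω₁] [MeasurableSpace Ω₂]
    [MeasurableSpace E]
    (P₁ : Measure Ω₁) (P₂ : Measure Ω₂) (X : ι → Ω₁ → E) (Y : ι → Ω₂ → E) : Prop :=
  Measure.map (fun ω i => X i ω) P₁ = Measure.map (fun ω i => Y i ω) P₂

/-- A discrete-time process is self-similar with scaling function `b` if for every `n ≥ 1`,
`(X (n*m))ₘ ≐ (b n • X m)ₘ`. -/
def SelfSimilar {Ω : Type*} [MeasurableSpace Ω] (P : Measure Ω) (X : ℕ → Ω → ℝ)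
    (b : ℕ → ℝ) : Prop :=
  ∀ n : ℕ, 1 ≤ n → EqDistFam P P (fun m ω => X (n * m) ω) (fun m ω => b n * X m ω)

/-- A discrete-time process has stationary increments if for every `k ≥ 1`,
`(X (m+1) - X m)ₘ ≐ (X (m+k+1) - X (m+k))ₘ`. -/
def StationaryIncrements {Ω : Type*} [MeasurableSpace Ω] (P : Measure Ω)
    (X : ℕ → Ω → ℝ) : Prop :=
  ∀ k : ℕ, 1 ≤ k → EqDistFam P P (fun m ω => X (m + 1) ω - X m ω)
    (fun m ω => X (m + k + 1) ω - X (m + k) ω)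

/-- Pushing an equality of distributions of families through a measurable functional. -/
lemma aux_map_eq {Ω : Type*} [MeasurableSpace Ω] {P : Measure Ω} {X Y : ℕ → Ω → ℝ}
    (hX : ∀ n, Measurable (X n)) (hY : ∀ n, Measurable (Y n))
    (h : EqDistFam P P X Y) {g : (ℕ → ℝ) → ℝ} (hg : Measurable g)
    {S : Set ℝ} (hS : MeasurableSet S) :
    P {ω | g (fun i => X i ω) ∈ S} = P {ω | g (fun i => Y i ω) ∈ S} := by
  have hFX : Measurable (fun ω (i : ℕ) => X i ω) := measurable_pi_lambda _ hX
  have hFY : Measurable (fun ω (i : ℕ) => Y i ω) := measurable_pi_lambda _ hY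
  have h2 := congrArg (Measure.map g) h
  rw [Measure.map_map hg hFX, Measure.map_map hg hFY] at h2
  have e1 : P {ω | g (fun i => X i ω) ∈ S}
      = Measure.map (g ∘ fun ω (i : ℕ) => X i ω) P S := by
    rw [Measure.map_apply (hg.comp hFX) hS]; rfl
  have e2 : P {ω | g (fun i => Y i ω) ∈ S}
      = Measure.map (g ∘ fun ω (i : ℕ) => Y i ω) P S := by
    rw [Measure.map_apply (hg.comp hFY) hS]; rfl
  rw [e1, e2, h2]

/-- The tail probabilities of a random variable tend to `0`. -/
lemma tail_tendsto {Ω : Type*} [MeasurableSpace Ω] (P : Measure Ω) [IsProbabilityMeasure P]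
    {Y : Ω → ℝ} (hY : Measurable Y) :
    Tendsto (fun j : ℕ => P {ω | (j : ℝ) ≤ |Y ω|}) atTop (nhds 0) := by
  have hmeas : ∀ j : ℕ, MeasurableSet {ω | (j : ℝ) ≤ |Y ω|} := fun j =>
    measurableSet_le measurable_const hY.abs
  have hanti : Antitone (fun j : ℕ => {ω | (j : ℝ) ≤ |Y ω|}) := by
    intro a b hab ω hω
    simp only [Set.mem_setOf_eq] at hω ⊢
    exact le_trans (by exact_mod_cast hab) hω
  have hempty : (⋂ j : ℕ, {ω | (j : ℝ) ≤ |Y ω|}) = ∅ := by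
    ext ω
    simp only [Set.mem_iInter, Set.mem_setOf_eq, Set.mem_empty_iff_false, iff_false, not_forall,
      not_le]
    obtain ⟨j, hj⟩ := exists_nat_gt |Y ω|
    exact ⟨j, hj⟩
  have := tendsto_measure_iInter_atTop (μ := P)
    (s := fun j : ℕ => {ω | (j : ℝ) ≤ |Y ω|})
    (fun j => (hmeas j).nullMeasurableSet) hanti ⟨0, measure_ne_top _ _⟩
  rwa [hempty, measure_empty] at this

lemma padic_pow_calc {p : ℕ} (hp : p.Prime) (H : ℝ) (k : ℕ) :
    (padicNormNat p (p ^ k)) ^ H = ((((p : ℝ)) ^ H) ^ k)⁻¹ := by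
  haveI : Fact p.Prime := ⟨hp⟩
  have hq : padicNorm p ((p ^ k : ℕ) : ℚ) = ((p : ℚ))⁻¹ ^ k := by
    push_cast
    induction k with
    | zero => simp
    | succ k ih =>
        rw [pow_succ, padicNorm.mul, ih, padicNorm.padicNorm_p hp.one_lt, pow_succ]
  have hp0 : (0 : ℝ) < (p : ℝ) := by exact_mod_cast hp.pos
  rw [padicNormNat, hq]
  push_cast
  rw [inv_pow, ← Real.rpow_natCast ((p:ℝ)) k, ← Real.inv_rpow hp0.le,
    ← Real.rpow_mul (by positivity), mul_comm, Real.rpow_mul (by positivity),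
    Real.rpow_natCast, Real.inv_rpow hp0.le, inv_pow]

/-- Telescoping stationary increments: `X (m+n) - X n` has the same law as `X m - X 0`. -/
lemma incr_eq {Ω : Type*} [MeasurableSpace Ω] {P : Measure Ω} {X : ℕ → Ω → ℝ}
    (hXmeas : ∀ n, Measurable (X n)) (hsi : StationaryIncrements P X)
    {n : ℕ} (hn : 1 ≤ n) (m : ℕ) {S : Set ℝ} (hS : MeasurableSet S) :
    P {ω | X (m + n) ω - X n ω ∈ S} = P {ω | X m ω - X 0 ω ∈ S} := by
  have hg : Measurable (fun y : ℕ → ℝ => ∑ i ∈ Finset.range m, y i) :=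
    Finset.measurable_sum _ (fun i _ => measurable_pi_apply i)
  have h := aux_map_eq (X := fun m' ω => X (m' + 1) ω - X m' ω)
    (Y := fun m' ω => X (m' + n + 1) ω - X (m' + n) ω)
    (fun m' => (hXmeas _).sub (hXmeas _)) (fun m' => (hXmeas _).sub (hXmeas _))
    (hsi n hn) hg hS
  have e1 : ∀ ω : Ω, (∑ i ∈ Finset.range m, (X (i + 1) ω - X i ω)) = X m ω - X 0 ω :=
    fun ω => Finset.sum_range_sub (fun i => X i ω) m
  have e2 : ∀ ω : Ω, (∑ i ∈ Finset.range m, (X (i + n + 1) ω - X (i + n) ω))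
      = X (m + n) ω - X n ω := by
    intro ω
    have := Finset.sum_range_sub (fun i => X (i + n) ω) m
    simp only [zero_add] at this
    rw [← this]
    exact Finset.sum_congr rfl fun i _ => by rw [add_right_comm]
  simp only [e1, e2] at h
  exact h.symm

/-- Proposition 2.6 (2): a type-II dt-ss-si process is recurrent: almost surely every
value `X n` is an accumulation point of the sequence. -/
theorem stmt8 {Ω : Type*} [MeasurableSpace Ω] (P : Measure Ω) [IsProbabilityMeasure P]
    (X : ℕ → Ω → ℝ) (hXmeas : ∀ n, Measurable (X n))
    (p : ℕ) (hp : p.Prime) (H : ℝ) (hH : 0 < H)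
    (hss : SelfSimilar P X (fun n => (padicNormNat p n) ^ H))
    (hsi : StationaryIncrements P X) :
    ∀ᵐ ω ∂P, ∀ n : ℕ,
      Filter.liminf (fun m : ℕ => |X m ω - X n ω|) Filter.atTop = 0 := by
  set r : ℝ := (p : ℝ) ^ H with hr_def
  have hp0 : (0 : ℝ) < (p : ℝ) := by exact_mod_cast hp.pos
  have hp1 : (1 : ℝ) < (p : ℝ) := by exact_mod_cast hp.one_lt
  have hr1 : 1 < r := by
    rw [hr_def]
    exact Real.one_lt_rpow_iff_of_pos hp0 |>.mpr (Or.inl ⟨hp1, hH⟩)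
  have hr0 : 0 < r := lt_trans one_pos hr1
  have habs : ∀ t : ℝ, MeasurableSet {x : ℝ | t ≤ |x|} := fun t =>
    measurableSet_le measurable_const measurable_id.abs
  -- the law of `X (p^k)` in terms of `X 1` (and of `X 0`).
  have hssk : ∀ (k m : ℕ) (t : ℝ),
      P {ω | t ≤ |X (p ^ k * m) ω|} = P {ω | t * r ^ k ≤ |X m ω|} := by
    intro k m t
    have h := aux_map_eq (X := fun m' ω => X (p ^ k * m') ω)
      (Y := fun m' ω => (padicNormNat p (p ^ k)) ^ H * X m' ω)
      (fun m' => hXmeas _) (fun m' => (hXmeas m').const_mul _)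
      (hss (p ^ k) (Nat.one_le_iff_ne_zero.mpr (pow_ne_zero k hp.pos.ne')))
      (g := fun y => y m) (measurable_pi_apply m) (habs t)
    simp only [Set.mem_setOf_eq] at h
    rw [h, padic_pow_calc hp H k]
    congr 1
    ext ω
    simp only [Set.mem_setOf_eq, abs_mul, abs_inv, abs_pow,
      abs_of_pos hp0, ← hr_def, abs_of_pos hr0]
    rw [inv_mul_eq_div, le_div_iff₀ (pow_pos hr0 k)]
  -- Step 1 : `X 0 = 0` almost surely.
  have hX0 : ∀ᵐ ω ∂P, X 0 ω = 0 := by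
    have hstep : ∀ (k : ℕ) (t : ℝ), P {ω | t ≤ |X 0 ω|} = P {ω | t * r ^ k ≤ |X 0 ω|} := by
      intro k t
      have := hssk k 0 t
      rwa [Nat.mul_zero] at this
    have hzero : ∀ t : ℝ, 0 < t → P {ω | t ≤ |X 0 ω|} = 0 := by
      intro t ht
      refine le_antisymm (ge_of_tendsto' (tail_tendsto P (hXmeas 0)) fun j => ?_) (zero_le)
      obtain ⟨k, hk⟩ := ((tendsto_pow_atTop_atTop_of_one_lt hr1).eventually_ge_atTop
        ((j : ℝ) / t)).exists
      rw [hstep k t]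
      refine measure_mono fun ω hω => ?_
      simp only [Set.mem_setOf_eq] at hω ⊢
      calc (j : ℝ) ≤ t * r ^ k := by rwa [← div_le_iff₀' ht]
        _ ≤ |X 0 ω| := hω
    rw [ae_iff]
    refine measure_mono_null (fun ω hω => ?_)
      (measure_iUnion_null (s := fun j : ℕ => {ω | 1 / ((j : ℝ) + 1) ≤ |X 0 ω|})
        fun j => hzero _ (by positivity))
    simp only [Set.mem_setOf_eq, not_forall] at hω
    have hpos : 0 < |X 0 ω| := abs_pos.mpr hω
    obtain ⟨j, hj⟩ := exists_nat_gt (1 / |X 0 ω|)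
    refine Set.mem_iUnion.mpr ⟨j, ?_⟩
    simp only [Set.mem_setOf_eq]
    rw [div_le_iff₀ (by positivity)]
    rw [div_lt_iff₀ hpos] at hj
    nlinarith [hpos, hj]
  -- Step 2 : the key probability estimate.
  have keyP : ∀ (n k : ℕ) (ε : ℝ),
      P {ω | ε ≤ |X (n + p ^ k) ω - X n ω|} = P {ω | ε * r ^ k ≤ |X 1 ω|} := by
    intro n k ε
    have hA : P {ω | ε ≤ |X (n + p ^ k) ω - X n ω|}
        = P {ω | ε ≤ |X (p ^ k) ω - X 0 ω|} := by
      rcases Nat.eq_zero_or_pos n with h0 | hn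
      · subst h0; rw [zero_add]
      · have := incr_eq hXmeas hsi hn (p ^ k) (S := {x : ℝ | ε ≤ |x|}) (habs ε)
        rw [add_comm]
        exact this
    have hB : P {ω | ε ≤ |X (p ^ k) ω - X 0 ω|} = P {ω | ε ≤ |X (p ^ k) ω|} := by
      refine measure_congr (hX0.mono fun ω h => ?_)
      have : (ε ≤ |X (p ^ k) ω - X 0 ω|) = (ε ≤ |X (p ^ k) ω|) := by rw [h, sub_zero]
      exact this
    have hC := hssk k 1 ε
    rw [Nat.mul_one] at hC
    rw [hA, hB, hC]
  -- Step 3 : for each `n` and each `ε > 0`, a.s. frequently `|X m - X n| < ε`.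
  have freq : ∀ n : ℕ, ∀ᵐ ω ∂P, ∀ j : ℕ,
      ∃ᶠ m in atTop, |X m ω - X n ω| < 1 / ((j : ℝ) + 1) := by
    intro n
    rw [ae_all_iff]
    intro j
    set ε : ℝ := 1 / ((j : ℝ) + 1) with hε_def
    have hε : 0 < ε := by positivity
    have hAM : ∀ M : ℕ, P {ω | ∀ m ≥ M, ε ≤ |X m ω - X n ω|} = 0 := by
      intro M
      refine le_antisymm (ge_of_tendsto' (tail_tendsto P (hXmeas 1)) fun i => ?_) (zero_le)
      obtain ⟨k₁, hk₁⟩ := ((tendsto_pow_atTop_atTop_of_one_lt hr1).eventually_ge_atTop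
        ((i : ℝ) / ε)).exists
      set k := max k₁ M with hk_def
      have hrk : (i : ℝ) / ε ≤ r ^ k :=
        hk₁.trans (pow_le_pow_right₀ hr1.le (le_max_left _ _))
      have hMk : M ≤ n + p ^ k :=
        le_trans (le_max_right k₁ M) (le_trans (Nat.lt_pow_self (n := k) hp.one_lt).le
          (Nat.le_add_left _ _))
      calc P {ω | ∀ m ≥ M, ε ≤ |X m ω - X n ω|}
          ≤ P {ω | ε ≤ |X (n + p ^ k) ω - X n ω|} :=
            measure_mono fun ω hω => hω _ hMk
        _ = P {ω | ε * r ^ k ≤ |X 1 ω|} := keyP n k ε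
        _ ≤ P {ω | (i : ℝ) ≤ |X 1 ω|} := by
            refine measure_mono fun ω hω => ?_
            simp only [Set.mem_setOf_eq] at hω ⊢
            calc (i : ℝ) ≤ ε * r ^ k := by rwa [← div_le_iff₀' hε]
              _ ≤ |X 1 ω| := hω
    rw [ae_iff]
    refine measure_mono_null (fun ω hω => ?_) (measure_iUnion_null
      (s := fun M : ℕ => {ω | ∀ m ≥ M, ε ≤ |X m ω - X n ω|}) hAM)
    simp only [Set.mem_setOf_eq, Filter.not_frequently, not_lt] at hω
    obtain ⟨M, hM⟩ := eventually_atTop.mp hω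
    exact Set.mem_iUnion.mpr ⟨M, hM⟩
  -- Step 4 : conclusion.
  rw [ae_all_iff]
  intro n
  filter_upwards [freq n] with ω hω
  have hbdd : IsBoundedUnder (· ≥ ·) atTop (fun m : ℕ => |X m ω - X n ω|) :=
    ⟨0, Filter.eventually_map.mpr (Eventually.of_forall fun m => abs_nonneg _)⟩
  refine le_antisymm ?_ ?_
  · refine ge_of_tendsto' tendsto_one_div_add_atTop_nhds_zero_nat fun j => ?_
    exact liminf_le_of_frequently_le ((hω j).mono fun m hm => hm.le) hbdd
  · refine le_liminf_of_le ?_ (Eventually.of_forall fun m => abs_nonneg _)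
    exact IsCoboundedUnder.of_frequently_le ((hω 0).mono fun m hm => hm.le)
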